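/- Let D be an r×r real positive definite matrix and let X be an (r+s)×(r+s) real positive semidefinite matrix with fromBlocks(D,0,0,0) • X = 0. Then every entry of X having at least one index among the first r indices is zero, i.e., X = fromBlocks(0,0,0,X₂₂) where X₂₂ is the lower-right s×s block of X, and X₂₂ is positive semidefinite. (This justifies the row/column deletion of the Basic Step of Sieve-SDP.) -/

import Mathlib

open Matrix

/-- If `D ≻ 0` and `A ⪰ 0` with `trace (D * A) = 0`, then `A = 0`. -/
lemma trace_mul_eq_zero_of_posDef_posSemidef {r : ℕ}
    {D A : Matrix (Fin r) (Fin r) ℝ} (hD : D.PosDef) (hA : A.PosSemidef)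
    (h : (D * A).trace = 0) : A = 0 := by
  obtain ⟨B, rfl⟩ : ∃ B : Matrix (Fin r) (Fin r) ℝ, A = Bᴴ * B := by
    open scoped MatrixOrder in
    exact CStarAlgebra.nonneg_iff_eq_star_mul_self.mp hA.nonneg
  have hcyc : (D * (Bᴴ * B)).trace = (B * D * Bᴴ).trace := by
    rw [← Matrix.mul_assoc, Matrix.trace_mul_cycle]
  have hdiag : ∀ i, (B * D * Bᴴ) i i = (B i) ⬝ᵥ D *ᵥ (B i) := by
    intro i
    simp only [Matrix.mul_apply, Matrix.conjTranspose_apply, RCLike.star_def, starRingEnd_apply,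
      star_trivial, dotProduct, Matrix.mulVec, Finset.sum_mul, Finset.mul_sum]
    rw [Finset.sum_comm]
    exact Finset.sum_congr rfl fun k _ => Finset.sum_congr rfl fun j _ => by ring
  have hnonneg : ∀ i, 0 ≤ (B * D * Bᴴ) i i := by
    intro i
    rw [hdiag i]
    simpa using hD.posSemidef.dotProduct_mulVec_nonneg (B i)
  have htr0 : (B * D * Bᴴ).trace = 0 := by rw [← hcyc, h]
  have hzero : ∀ i, (B * D * Bᴴ) i i = 0 := by
    intro i
    have := (Finset.sum_eq_zero_iff_of_nonneg (fun j _ => hnonneg j)).mp htr0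
    exact this i (Finset.mem_univ i)
  have hBrow : ∀ i, B i = 0 := by
    intro i
    by_contra hne
    have := fun hne => hD.dotProduct_mulVec_pos (x := B i) hne
    simp only [star_trivial] at this
    have hlt := this hne
    have hz := hzero i
    rw [hdiag i] at hz
    exact absurd hz (ne_of_gt hlt)
  have hB : B = 0 := by ext i j; exact congrFun (hBrow i) j
  rw [hB]; simp

theorem sieve_row_column_deletion (r s : ℕ)
    (D : Matrix (Fin r) (Fin r) ℝ) (hD : D.PosDef)
    (X : Matrix (Fin r ⊕ Fin s) (Fin r ⊕ Fin s) ℝ) (hX : X.PosSemidef)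
    (h : ((fromBlocks D 0 0 0 : Matrix (Fin r ⊕ Fin s) (Fin r ⊕ Fin s) ℝ) * X).trace = 0) :
    (∀ (i : Fin r) (j : Fin r ⊕ Fin s), X (Sum.inl i) j = 0 ∧ X j (Sum.inl i) = 0) ∧
    X = fromBlocks 0 0 0 X.toBlocks₂₂ ∧
    X.toBlocks₂₂.PosSemidef := by
  classical
  have hX11 : (X.toBlocks₁₁).PosSemidef := hX.submatrix Sum.inl
  -- the trace reduces to `trace (D * X₁₁)`
  have htr : (D * X.toBlocks₁₁).trace = 0 := by
    rw [← h]
    simp only [Matrix.trace, Matrix.diag, Fintype.sum_sum_type, Matrix.mul_apply,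
      Fintype.sum_sum_type, Matrix.fromBlocks_apply₁₁, Matrix.fromBlocks_apply₁₂,
      Matrix.fromBlocks_apply₂₁, Matrix.fromBlocks_apply₂₂, Matrix.toBlocks₁₁,
      Matrix.of_apply, Matrix.zero_apply, zero_mul, Finset.sum_const_zero, add_zero]
  have hX11z : X.toBlocks₁₁ = 0 := trace_mul_eq_zero_of_posDef_posSemidef hD hX11 htr
  -- diagonal entries at `inl i` vanish
  have hdiag : ∀ i : Fin r, X (Sum.inl i) (Sum.inl i) = 0 := fun i =>
    congrFun (congrFun hX11z i) i
  -- columns at `inl i` vanish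
  have hcol : ∀ (i : Fin r) (j : Fin r ⊕ Fin s), X j (Sum.inl i) = 0 := by
    intro i j
    have hx : star (Pi.single (Sum.inl i : Fin r ⊕ Fin s) (1:ℝ)) ⬝ᵥ
        X *ᵥ Pi.single (Sum.inl i) 1 = 0 := by
      simp [Matrix.mulVec_single, hdiag i]
    have := (hX.dotProduct_mulVec_zero_iff _).mp hx
    have hj := congrFun this j
    simpa [Matrix.mulVec_single] using hj
  have hrow : ∀ (i : Fin r) (j : Fin r ⊕ Fin s), X (Sum.inl i) j = 0 := by
    intro i j
    have hsym : X (Sum.inl i) j = X j (Sum.inl i) := by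
      have := congrFun (congrFun hX.1 j) (Sum.inl i)
      simpa [Matrix.conjTranspose_apply] using this
    rw [hsym]; exact hcol i j
  refine ⟨fun i j => ⟨hrow i j, hcol i j⟩, ?_, hX.submatrix Sum.inr⟩
  ext i j
  cases i with
  | inl i => simp [hrow i j, Matrix.fromBlocks]; cases j <;> simp [hrow]
  | inr i =>
    cases j with
    | inl j => simp [fromBlocks_apply₂₁, hcol j (Sum.inr i)]
    | inr j => simp [fromBlocks_apply₂₂, Matrix.toBlocks₂₂]
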